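/- Let a, b ∈ ℂ with |a|² − |b|² = 1 and let v(z) = (a z + b)/(conj(b) z + conj(a)) be the corresponding Möbius transformation of the unit disk. Then ∫_{|z|<1} |v''(z)/v'(z)|² d²z = 4π log(|a|²). -/

import Mathlib

open MeasureTheory Complex Set

theorem angular (a b : ℂ) (hba : ‖b‖ < ‖a‖) (r : ℝ) (hr0 : 0 < r) (hr1 : r < 1) :
    ∫ θ in (-Real.pi)..Real.pi, ((Complex.normSq ((starRingEnd ℂ) b * circleMap 0 r θ + (starRingEnd ℂ) a))⁻¹ : ℝ) =
      2 * Real.pi / (‖a‖ ^ 2 - ‖b‖ ^ 2 * r ^ 2) := by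
  have hb0 : (0:ℝ) ≤ ‖b‖ := norm_nonneg b
  have ha0 : a ≠ 0 := by
    intro h; rw [h] at hba; simp at hba; nlinarith
  have hapos : 0 < ‖a‖ := norm_pos_iff.mpr ha0
  have hK : 0 < ‖a‖ ^ 2 - ‖b‖ ^ 2 * r ^ 2 := by
    have hr2 : r ^ 2 ≤ 1 := by nlinarith
    have h1 := mul_le_mul_of_nonneg_left hr2 (sq_nonneg (‖b‖))
    nlinarith
  set K : ℝ := ‖a‖ ^ 2 - ‖b‖ ^ 2 * r ^ 2 with hKdef
  have hd : ∀ w : ℂ, ‖w‖ ≤ r → (starRingEnd ℂ) b * w + (starRingEnd ℂ) a ≠ 0 := by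
    intro w hw h
    have h2 : (starRingEnd ℂ) b * w = -(starRingEnd ℂ) a := by linear_combination h
    have := congrArg (‖·‖) h2
    simp [map_mul] at this
    nlinarith
  set f : ℂ → ℂ := fun w => (a * ((starRingEnd ℂ) b * w + (starRingEnd ℂ) a))⁻¹ with hfdef
  set w₂ : ℂ := -b * (r:ℂ)^2 / a with hw2def
  have hw₂ : w₂ ∈ Metric.ball (0:ℂ) r := by
    simp only [Metric.mem_ball, dist_zero_right, hw2def, norm_div, norm_neg, norm_mul]
    simp only [norm_neg, norm_mul, norm_pow, Complex.norm_real, Real.norm_eq_abs, _root_.abs_of_pos hr0]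
    rw [div_lt_iff₀ hapos]
    have h1 := mul_le_mul_of_nonneg_left (by nlinarith : r ^ 2 ≤ r) hb0
    nlinarith [mul_lt_mul_of_pos_right hba hr0]
  have hdiff : DiffContOnCl ℂ f (Metric.ball 0 r) := by
    apply DifferentiableOn.diffContOnCl
    apply DifferentiableOn.mono (t := Metric.closedBall 0 r) ?_ Metric.closure_ball_subset_closedBall
    apply DifferentiableOn.inv
    · exact (differentiableOn_const a).mul
        (((differentiableOn_const _).mul differentiableOn_id).add (differentiableOn_const _))
    · intro w hw
      simp only [Metric.mem_closedBall, dist_zero_right] at hw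
      exact mul_ne_zero ha0 (hd w hw)
  have hC := hdiff.circleIntegral_sub_inv_smul hw₂
  have hfw₂ : f w₂ = ((K:ℝ):ℂ)⁻¹ := by
    show (a * ((starRingEnd ℂ) b * (-b * (r:ℂ)^2 / a) + (starRingEnd ℂ) a))⁻¹ = ((K:ℝ):ℂ)⁻¹
    congr 1
    have h1 : a * ((starRingEnd ℂ) b * (-b * (r:ℂ)^2 / a) + (starRingEnd ℂ) a)
        = a * (starRingEnd ℂ) a - b * (starRingEnd ℂ) b * (r:ℂ)^2 := by
      field_simp
      ring
    rw [h1, mul_conj, mul_conj]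
    simp only [← Complex.sq_norm, hKdef]
    push_cast
    ring
  have hpt : ∀ θ : ℝ, deriv (circleMap 0 r) θ • ((circleMap 0 r θ - w₂)⁻¹ • f (circleMap 0 r θ))
      = Complex.I * (((Complex.normSq ((starRingEnd ℂ) b * circleMap 0 r θ + (starRingEnd ℂ) a) : ℝ) : ℂ))⁻¹ := by
    intro θ
    set w : ℂ := circleMap 0 r θ with hw
    have hwabs : ‖w‖ = r := by
      rw [hw]; simp [norm_circleMap_zero, _root_.abs_of_pos hr0]
    have hw0 : w ≠ 0 := by
      intro h; rw [h] at hwabs; simp at hwabs; exact hr0.ne hwabs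
    have hwc : w * (starRingEnd ℂ) w = ((r:ℂ))^2 := by
      rw [mul_conj, ← Complex.sq_norm, hwabs]; push_cast; ring
    set u : ℂ := (starRingEnd ℂ) b * w + (starRingEnd ℂ) a with hu
    have hu0 : u ≠ 0 := hd w hwabs.le
    have hcu : (starRingEnd ℂ) u = b * (starRingEnd ℂ) w + a := by
      rw [hu]; simp [map_add, map_mul]
    have hnsu : ((Complex.normSq u : ℝ) : ℂ) = u * (starRingEnd ℂ) u := (mul_conj u).symm
    have hns0 : ((Complex.normSq u : ℝ) : ℂ) ≠ 0 := by
      rw [hnsu]; exact mul_ne_zero hu0 (by simpa using hu0)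
    have h1 : (w - w₂) * a = a * w + b * (r:ℂ)^2 := by
      rw [hw2def]; field_simp; ring
    have key : (w - w₂) * (a * u) = ((Complex.normSq u : ℝ) : ℂ) * w := by
      rw [hnsu, hcu]
      calc (w - w₂) * (a * u) = ((w - w₂) * a) * u := by ring
        _ = (a * w + b * (r:ℂ)^2) * u := by rw [h1]
        _ = u * (b * (starRingEnd ℂ) w + a) * w := by linear_combination u * b * hwc.symm
    have hderiv : deriv (circleMap 0 r) θ = w * Complex.I := deriv_circleMap 0 r θ
    rw [hderiv, smul_eq_mul, smul_eq_mul]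
    show w * Complex.I * ((w - w₂)⁻¹ * (a * u)⁻¹) = Complex.I * ((Complex.normSq u : ℝ) : ℂ)⁻¹
    rw [← mul_inv, key]
    field_simp
  -- assemble the circle integral
  have hI : (∮ z in C(0, r), (z - w₂)⁻¹ • f z)
      = Complex.I * ∫ θ in (0:ℝ)..2*Real.pi, (((Complex.normSq ((starRingEnd ℂ) b * circleMap 0 r θ + (starRingEnd ℂ) a) : ℝ) : ℂ))⁻¹ := by
    rw [circleIntegral, ← intervalIntegral.integral_const_mul]
    exact intervalIntegral.integral_congr fun θ _ => hpt θ
  rw [hC, hfw₂, smul_eq_mul] at hI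
  have hX : (∫ θ in (0:ℝ)..2*Real.pi, (((Complex.normSq ((starRingEnd ℂ) b * circleMap 0 r θ + (starRingEnd ℂ) a) : ℝ) : ℂ))⁻¹)
      = 2 * (Real.pi:ℂ) * ((K:ℝ):ℂ)⁻¹ := by
    apply mul_left_cancel₀ Complex.I_ne_zero
    rw [← hI]; ring
  have hreal : (∫ θ in (0:ℝ)..2*Real.pi, (Complex.normSq ((starRingEnd ℂ) b * circleMap 0 r θ + (starRingEnd ℂ) a))⁻¹)
      = 2 * Real.pi / K := by
    have hcast : ((∫ θ in (0:ℝ)..2*Real.pi, (Complex.normSq ((starRingEnd ℂ) b * circleMap 0 r θ + (starRingEnd ℂ) a))⁻¹ : ℝ) : ℂ)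
        = ((2 * Real.pi / K : ℝ) : ℂ) := by
      rw [← intervalIntegral.integral_ofReal]
      push_cast
      rw [hX]
      field_simp
    exact_mod_cast hcast
  have hper : Function.Periodic
      (fun θ : ℝ => (Complex.normSq ((starRingEnd ℂ) b * circleMap 0 r θ + (starRingEnd ℂ) a))⁻¹) (2*Real.pi) :=
    fun θ => by simp [(periodic_circleMap 0 r) θ]
  have hshift := hper.intervalIntegral_add_eq (-Real.pi) 0
  rw [show -Real.pi + 2*Real.pi = Real.pi by ring, zero_add] at hshift
  rw [hshift, hreal]

theorem ratio_eq (a b : ℂ) (hba : ‖b‖ < ‖a‖)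
    (hone : a * (starRingEnd ℂ) a - b * (starRingEnd ℂ) b = 1)
    (v : ℂ → ℂ)
    (hv : ∀ z, v z = (a * z + b) / ((starRingEnd ℂ) b * z + (starRingEnd ℂ) a))
    (z : ℂ) (hz : ‖z‖ < 1) :
    deriv (deriv v) z / deriv v z = -2 * (starRingEnd ℂ) b / ((starRingEnd ℂ) b * z + (starRingEnd ℂ) a) := by
  have hb0 : (0:ℝ) ≤ ‖b‖ := norm_nonneg b
  have hd : ∀ w : ℂ, ‖w‖ ≤ 1 → (starRingEnd ℂ) b * w + (starRingEnd ℂ) a ≠ 0 := by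
    intro w hw h
    have h2 : (starRingEnd ℂ) b * w = -(starRingEnd ℂ) a := by linear_combination h
    have := congrArg (‖·‖) h2
    simp [map_mul] at this
    nlinarith
  set U : Set ℂ := {w : ℂ | (starRingEnd ℂ) b * w + (starRingEnd ℂ) a ≠ 0} with hUdef
  have hU : IsOpen U := by
    have : U = (fun w => (starRingEnd ℂ) b * w + (starRingEnd ℂ) a) ⁻¹' {(0:ℂ)}ᶜ := by
      ext w; simp [hUdef]
    rw [this]
    exact IsOpen.preimage (by fun_prop) isOpen_compl_singleton
  have hveq : v = fun w => (a * w + b) / ((starRingEnd ℂ) b * w + (starRingEnd ℂ) a) := funext hv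
  have hlin : ∀ w : ℂ, HasDerivAt (fun w => (starRingEnd ℂ) b * w + (starRingEnd ℂ) a) ((starRingEnd ℂ) b) w := by
    intro w
    simpa using ((hasDerivAt_id w).const_mul ((starRingEnd ℂ) b)).add_const ((starRingEnd ℂ) a)
  have hDeriv : ∀ w ∈ U, HasDerivAt v ((((starRingEnd ℂ) b * w + (starRingEnd ℂ) a)^2)⁻¹) w := by
    intro w hw
    have h1 : HasDerivAt (fun w => a * w + b) a w := by
      simpa using ((hasDerivAt_id w).const_mul a).add_const b
    have h3 := h1.div (hlin w) hw
    rw [hveq]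
    refine h3.congr_deriv ?_
    have hnum : a * ((starRingEnd ℂ) b * w + (starRingEnd ℂ) a) - (a * w + b) * (starRingEnd ℂ) b = 1 := by
      linear_combination hone
    rw [hnum, one_div]
  have hderiv1 : ∀ w ∈ U, deriv v w = (((starRingEnd ℂ) b * w + (starRingEnd ℂ) a)^2)⁻¹ :=
    fun w hw => (hDeriv w hw).deriv
  have hzU : z ∈ U := hd z hz.le
  have hden : (starRingEnd ℂ) b * z + (starRingEnd ℂ) a ≠ 0 := hzU
  have h2nd : deriv (deriv v) z
      = -(2 * ((starRingEnd ℂ) b * z + (starRingEnd ℂ) a) * (starRingEnd ℂ) b) /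
        ((((starRingEnd ℂ) b * z + (starRingEnd ℂ) a)^2)^2) := by
    have hev : deriv v =ᶠ[nhds z] fun w => (((starRingEnd ℂ) b * w + (starRingEnd ℂ) a)^2)⁻¹ :=
      Filter.eventuallyEq_of_mem (hU.mem_nhds hzU) hderiv1
    rw [hev.deriv_eq]
    have h3 : HasDerivAt (fun w => ((starRingEnd ℂ) b * w + (starRingEnd ℂ) a)^2)
        (2 * ((starRingEnd ℂ) b * z + (starRingEnd ℂ) a) * (starRingEnd ℂ) b) z := by
      simpa [mul_comm, mul_assoc] using (hlin z).fun_pow 2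
    exact (h3.inv (pow_ne_zero 2 hden)).deriv
  rw [h2nd, hderiv1 z hzU]
  field_simp

theorem radial (A B : ℝ) (hB : 0 ≤ B) (h1 : A - B = 1) :
    ∫ r in (0:ℝ)..1, r * (4 * B * (2 * Real.pi / (A - B * r ^ 2))) = 4 * Real.pi * Real.log A := by
  have hpos : ∀ r : ℝ, r ∈ Set.uIcc (0:ℝ) 1 → 0 < A - B * r ^ 2 := by
    intro r hr
    rw [Set.uIcc_of_le (by norm_num)] at hr
    obtain ⟨h0, h1'⟩ := hr
    nlinarith [mul_le_mul_of_nonneg_left (by nlinarith : r^2 ≤ 1) hB]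
  have hF : ∀ r ∈ Set.uIcc (0:ℝ) 1,
      HasDerivAt (fun r => -(4 * Real.pi) * Real.log (A - B * r ^ 2))
        (r * (4 * B * (2 * Real.pi / (A - B * r ^ 2)))) r := by
    intro r hr
    have h2 : HasDerivAt (fun r : ℝ => A - B * r ^ 2) (-(B * (2 * r))) r :=
      (((hasDerivAt_pow 2 r).const_mul B).const_sub A).congr_deriv (by ring_nf)
    have h3 := (Real.hasDerivAt_log (hpos r hr).ne').comp r h2
    have h4 := h3.const_mul (-(4 * Real.pi))
    refine h4.congr_deriv ?_
    field_simp
  have hcont : ContinuousOn (fun r : ℝ => r * (4 * B * (2 * Real.pi / (A - B * r ^ 2))))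
      (Set.uIcc (0:ℝ) 1) := by
    apply ContinuousOn.mul continuousOn_id
    apply ContinuousOn.mul continuousOn_const
    apply ContinuousOn.div continuousOn_const
    · fun_prop
    · exact fun r hr => (hpos r hr).ne'
  rw [intervalIntegral.integral_eq_sub_of_hasDerivAt hF (hcont.intervalIntegrable)]
  have hA : A - B * 1 ^ 2 = 1 := by rw [one_pow, mul_one]; exact h1
  have hA0 : A - B * 0 ^ 2 = A := by ring_nf
  rw [hA, hA0, Real.log_one]
  ring

theorem moebius_energy (a b : ℂ) (hab : ‖a‖ ^ 2 - ‖b‖ ^ 2 = 1)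
    (v : ℂ → ℂ)
    (hv : ∀ z, v z = (a * z + b) / ((starRingEnd ℂ) b * z + (starRingEnd ℂ) a)) :
    (∫ z in {z : ℂ | ‖z‖ < 1}, ‖deriv (deriv v) z / deriv v z‖ ^ 2) =
      4 * Real.pi * Real.log (‖a‖ ^ 2) := by
  have hb0 : (0:ℝ) ≤ ‖b‖ := norm_nonneg b
  have ha0' : (0:ℝ) ≤ ‖a‖ := norm_nonneg a
  have hba : ‖b‖ < ‖a‖ := by nlinarith
  have hone : a * (starRingEnd ℂ) a - b * (starRingEnd ℂ) b = 1 := by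
    rw [mul_conj, mul_conj]
    have : (Complex.normSq a : ℝ) - Complex.normSq b = 1 := by
      rw [← Complex.sq_norm, ← Complex.sq_norm]; exact hab
    exact_mod_cast this
  have hd : ∀ w : ℂ, ‖w‖ ≤ 1 → (starRingEnd ℂ) b * w + (starRingEnd ℂ) a ≠ 0 := by
    intro w hw h
    have h2 : (starRingEnd ℂ) b * w = -(starRingEnd ℂ) a := by linear_combination h
    have := congrArg (‖·‖) h2
    simp [map_mul] at this
    nlinarith
  set S : Set ℂ := {z : ℂ | ‖z‖ < 1} with hSdef
  have hS : MeasurableSet S := (isOpen_lt continuous_norm continuous_const).measurableSet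
  set g₀ : ℂ → ℝ := fun z =>
    4 * ‖b‖ ^ 2 * (Complex.normSq ((starRingEnd ℂ) b * z + (starRingEnd ℂ) a))⁻¹ with hg₀
  -- Step 1: rewrite the integrand
  have step1 : (∫ z in S, ‖deriv (deriv v) z / deriv v z‖ ^ 2) = ∫ z in S, g₀ z := by
    apply setIntegral_congr_fun hS
    intro z hz
    show ‖deriv (deriv v) z / deriv v z‖ ^ 2 = g₀ z
    rw [ratio_eq a b hba hone v hv z hz]
    rw [norm_div, div_pow, div_eq_mul_inv, norm_mul, mul_pow, Complex.norm_conj, hg₀]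
    simp only [Complex.sq_norm]
    norm_num [Complex.normSq_apply]
  rw [step1]
  -- symm of polar coords is the circle map
  have hsymm : ∀ p : ℝ × ℝ, Complex.polarCoord.symm p = circleMap 0 p.1 p.2 := by
    intro p
    rw [Complex.polarCoord_symm_apply, circleMap]
    push_cast [Complex.exp_mul_I]
    ring
  set T : Set (ℝ × ℝ) := Set.Ioo (0:ℝ) 1 ×ˢ Set.Ioo (-Real.pi) Real.pi with hTdef
  have hT : MeasurableSet T := measurableSet_Ioo.prod measurableSet_Ioo
  have hTsub : T ⊆ polarCoord.target := by
    rw [polarCoord_target]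
    exact Set.prod_mono (fun x hx => hx.1) subset_rfl
  -- Step 2-5 : polar coordinates
  have step2 : (∫ z in S, g₀ z) = ∫ p in T, p.1 * g₀ (Complex.polarCoord.symm p) := by
    rw [← integral_indicator hS, ← Complex.integral_comp_polarCoord_symm (S.indicator g₀)]
    have hcg : ∀ p ∈ polarCoord.target,
        p.1 • S.indicator g₀ (Complex.polarCoord.symm p)
          = T.indicator (fun p : ℝ × ℝ => p.1 * g₀ (Complex.polarCoord.symm p)) p := by
      intro p hp
      rw [polarCoord_target] at hp
      obtain ⟨hp1, hp2⟩ := hp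
      by_cases h : p.1 < 1
      · rw [Set.indicator_of_mem, Set.indicator_of_mem, smul_eq_mul]
        · exact ⟨⟨hp1, h⟩, hp2⟩
        · rw [hSdef, Set.mem_setOf_eq, Complex.norm_polarCoord_symm, abs_of_pos hp1]
          exact h
      · rw [Set.indicator_of_notMem, Set.indicator_of_notMem, smul_zero]
        · intro hmem; exact h hmem.1.2
        · rw [hSdef, Set.mem_setOf_eq, Complex.norm_polarCoord_symm, abs_of_pos hp1]
          exact not_lt.mpr (not_lt.mp h)
    rw [setIntegral_congr_fun polarCoord.open_target.measurableSet hcg,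
      setIntegral_indicator hT, Set.inter_eq_self_of_subset_right hTsub]
  rw [step2]
  -- Integrability for Fubini
  have hint : IntegrableOn (fun p : ℝ × ℝ => p.1 * g₀ (Complex.polarCoord.symm p)) T := by
    apply MeasureTheory.IntegrableOn.mono_set
      (t := Set.Icc (0:ℝ) 1 ×ˢ Set.Icc (-Real.pi) Real.pi)
    · apply ContinuousOn.integrableOn_compact (isCompact_Icc.prod isCompact_Icc)
      apply ContinuousOn.mul (continuous_fst.continuousOn)
      rw [hg₀]
      apply ContinuousOn.mul continuousOn_const
      apply ContinuousOn.inv₀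
      · apply Continuous.continuousOn
        apply Complex.continuous_normSq.comp
        apply Continuous.add _ continuous_const
        apply continuous_const.mul
        have : Continuous (fun p : ℝ × ℝ => Complex.polarCoord.symm p) := by
          simp only [Complex.polarCoord_symm_apply]
          fun_prop
        exact this
      · intro p hp
        obtain ⟨hp1, hp2⟩ := hp
        have habs : ‖Complex.polarCoord.symm p‖ ≤ 1 := by
          rw [Complex.norm_polarCoord_symm, abs_le]
          exact ⟨by linarith [hp1.1], hp1.2⟩
        exact (Complex.normSq_pos.mpr (hd _ habs)).ne'
    · exact Set.prod_mono Set.Ioo_subset_Icc_self Set.Ioo_subset_Icc_self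
  -- Step 6: Fubini
  rw [hTdef, Measure.volume_eq_prod, setIntegral_prod _ (by rw [← Measure.volume_eq_prod]; exact hint)]
  -- Step 7: inner (angular) integral
  have step7 : ∀ r ∈ Set.Ioo (0:ℝ) 1,
      (∫ θ in Set.Ioo (-Real.pi) Real.pi, (r, θ).1 * g₀ (Complex.polarCoord.symm (r, θ)))
        = r * (4 * ‖b‖ ^ 2 *
            (2 * Real.pi / (‖a‖ ^ 2 - ‖b‖ ^ 2 * r ^ 2))) := by
    intro r hr
    have heq : ∀ θ : ℝ, (r, θ).1 * g₀ (Complex.polarCoord.symm (r, θ))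
        = (r * (4 * ‖b‖ ^ 2)) *
          (Complex.normSq ((starRingEnd ℂ) b * circleMap 0 r θ + (starRingEnd ℂ) a))⁻¹ := by
      intro θ
      rw [hg₀, hsymm (r, θ)]
      ring
    simp_rw [heq]
    rw [MeasureTheory.integral_const_mul]
    rw [← MeasureTheory.integral_Ioc_eq_integral_Ioo,
      ← intervalIntegral.integral_of_le (by linarith [Real.pi_pos] : -Real.pi ≤ Real.pi)]
    rw [angular a b hba r hr.1 hr.2]
    ring
  rw [setIntegral_congr_fun measurableSet_Ioo step7]
  -- Step 8: radial integral
  rw [← MeasureTheory.integral_Ioc_eq_integral_Ioo,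
    ← intervalIntegral.integral_of_le (by norm_num : (0:ℝ) ≤ 1)]
  exact radial (‖a‖ ^ 2) (‖b‖ ^ 2) (by positivity) hab
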